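/- arXiv:1606.02928 — 3 statements merged into one kernel-verified Lean document; each statement's English description precedes it below -/
import Mathlib

section
/- For all complex numbers q, a, b, p with |p| < 1 and q, a, b nonzero, and all integers k and n such that every theta-function factor appearing in a denominator is nonzero, the elliptic weights satisfy the shift properties w_{a,b;q,p}(k+n) = w_{a q^{2k}, b q^{k}; q, p}(n) and W_{a,b;q,p}(k+n) = W_{a,b;q,p}(k) · W_{a q^{2k}, b q^{k}; q, p}(n). -/
open scoped BigOperators Classical

noncomputable section
namespace EllRook

/-- Modified Jacobi theta function `θ(x;p)`. -/
def theta (x p : ℂ) : ℂ := ∏' j : ℕ, ((1 - p ^ j * x) * (1 - p ^ (j + 1) / x))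

/-- Elliptic small weight `w_{a,b;q,p}(k)`. -/
def ew (a b q p : ℂ) (k : ℤ) : ℂ :=
  q * (theta (a * q ^ (2 * k + 1)) p * theta (b * q ^ k) p * theta (a * q ^ (k - 2) / b) p) /
    (theta (a * q ^ (2 * k - 1)) p * theta (b * q ^ (k + 2)) p * theta (a * q ^ k / b) p)

/-- Elliptic big weight `W_{a,b;q,p}(k)`. -/
def eW (a b q p : ℂ) (k : ℤ) : ℂ :=
  q ^ k *
      (theta (a * q ^ (1 + 2 * k)) p * theta (b * q) p * theta (b * q ^ (2 : ℤ)) p *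
        theta (a * q ^ (-1 : ℤ) / b) p * theta (a / b) p) /
    (theta (a * q) p * theta (b * q ^ (k + 1)) p * theta (b * q ^ (k + 2)) p *
      theta (a * q ^ (k - 1) / b) p * theta (a * q ^ k / b) p)

/-- Elliptic number `[m]_{a,b;q,p}`. -/
def en (a b q p : ℂ) (m : ℤ) : ℂ :=
  (theta (q ^ m) p * theta (a * q ^ m) p * theta (b * q ^ (2 : ℤ)) p * theta (a / b) p) /
    (theta q p * theta (a * q) p * theta (b * q ^ (m + 1)) p * theta (a * q ^ (m - 1) / b) p)

/-- The q-number `[m]_q` for an integer `m`. -/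
def qInt (q : ℂ) (m : ℤ) : ℂ := (1 - q ^ m) / (1 - q)

/-- The Q-shifted factorial `(x;Q)_m`. -/
def qPoch (x Q : ℂ) (m : ℕ) : ℂ := ∏ i ∈ Finset.range m, (1 - x * Q ^ i)

/-- The q-binomial coefficient. -/
def qBinom (q : ℂ) (n k : ℕ) : ℂ :=
  ∏ i ∈ Finset.Icc 1 k, (1 - q ^ ((n : ℤ) - (k : ℤ) + (i : ℤ))) / (1 - q ^ (i : ℤ))

/-- The a;q-number `[m]_{x;q}`. -/
def aqNum (x q : ℂ) (m : ℤ) : ℂ :=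
  q ^ (1 - m) * (1 - q ^ m) * (1 - x * q ^ m) / ((1 - q) * (1 - x * q))

/-- The a;q big weight `W_{x;q}(k)`. -/
def aqW (x q : ℂ) (k : ℤ) : ℂ := q ^ (-k) * (1 - x * q ^ (1 + 2 * k)) / (1 - x * q)

/-- The a;q small weight `w_{a;q}(k)`. -/
def waq (a q : ℂ) (k : ℤ) : ℂ := q⁻¹ * (1 - a * q ^ (2 * k + 1)) / (1 - a * q ^ (2 * k - 1))

/-! Ferrers boards and file placements (alpha-parameter model).
Cells are written `(i, j)` for column `i` (from the left) and row `j` (from the bottom),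
both `1`-indexed. -/

/-- The board `B(h 1, …, h n)`: cells `(i,j)` with `1 ≤ i ≤ n`, `1 ≤ j ≤ h i`. -/
def ferrers (n : ℕ) (h : ℕ → ℕ) : Finset (ℕ × ℕ) :=
  ((Finset.Icc 1 n) ×ˢ (Finset.Icc 1 ((Finset.Icc 1 n).sup h))).filter fun c => c.2 ≤ h c.1

/-- `k`-file placements on a board: `k` cells, at most one per column. -/
def filePl (B : Finset (ℕ × ℕ)) (k : ℕ) : Finset (Finset (ℕ × ℕ)) :=
  B.powerset.filter fun P => P.card = k ∧ ∀ c ∈ P, ∀ d ∈ P, c.1 = d.1 → c = d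

/-- `v(c)`: number of cells of `P` strictly to the left of `c` in the same row. -/
def vP (P : Finset (ℕ × ℕ)) (c : ℕ × ℕ) : ℕ := (P.filter fun d => d.1 < c.1 ∧ d.2 = c.2).card

/-- `r_c(P)`: number of cells of `P` strictly to the left of and strictly above `c`. -/
def rcP (P : Finset (ℕ × ℕ)) (c : ℕ × ℕ) : ℕ := (P.filter fun d => d.1 < c.1 ∧ c.2 < d.2).card

/-- Elliptic weight of a cell in the alpha-parameter model. -/
def cellWt (a b q p : ℂ) (α : ℤ) (P : Finset (ℕ × ℕ)) (c : ℕ × ℕ) : ℂ :=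
  if ∃ d ∈ P, d.1 = c.1 ∧ c.2 < d.2 then 1
  else
    if c ∈ P then
      en (a * q ^ (2 * (-(c.2 : ℤ) + (α - 1) * (1 - (c.1 : ℤ) + (rcP P c : ℤ)))))
        (b * q ^ (-(c.2 : ℤ) + (α - 1) * (1 - (c.1 : ℤ) + (rcP P c : ℤ)))) q p
        ((α - 1) * (vP P c : ℤ) + 1)
    else
      eW (a * q ^ (2 * (-(c.2 : ℤ) + (α - 1) * (1 - (c.1 : ℤ) + (rcP P c : ℤ)))))
        (b * q ^ (-(c.2 : ℤ) + (α - 1) * (1 - (c.1 : ℤ) + (rcP P c : ℤ)))) q p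
        ((α - 1) * (vP P c : ℤ) + 1)

/-- The elliptic alpha-parameter rook number `r_k^{(α)}(a,b;q,p;B)` for the board with
`n` columns of heights `h 1, …, h n`; it is `0` for `k < 0`. -/
def rAlpha (a b q p : ℂ) (α : ℤ) (n : ℕ) (h : ℕ → ℕ) (k : ℤ) : ℂ :=
  if 0 ≤ k then
    ∑ P ∈ filePl (ferrers n h) k.toNat, ∏ c ∈ ferrers n h, cellWt a b q p α P c
  else 0

/-- q-weight of a cell in the alpha-parameter model. -/
def qCellWt (q : ℂ) (α : ℤ) (P : Finset (ℕ × ℕ)) (c : ℕ × ℕ) : ℂ :=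
  if ∃ d ∈ P, d.1 = c.1 ∧ c.2 < d.2 then 1
  else if c ∈ P then qInt q ((α - 1) * (vP P c : ℤ) + 1)
  else q ^ ((α - 1) * (vP P c : ℤ) + 1)

/-- The q-analogue `R_k^{(α)}(q;B)` of the alpha-parameter rook numbers. -/
def Rq (q : ℂ) (α : ℤ) (n : ℕ) (h : ℕ → ℕ) (k : ℕ) : ℂ :=
  ∑ P ∈ filePl (ferrers n h) k, ∏ c ∈ ferrers n h, qCellWt q α P c

/-- a;q-weight of a cell in the α = 2 model. -/
def aqCellWt (a q : ℂ) (P : Finset (ℕ × ℕ)) (c : ℕ × ℕ) : ℂ :=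
  if ∃ d ∈ P, d.1 = c.1 ∧ c.2 < d.2 then 1
  else
    if c ∈ P then
      aqNum (a * q ^ (2 * (-(c.2 : ℤ) + 1 - (c.1 : ℤ) + (rcP P c : ℤ)))) q ((vP P c : ℤ) + 1)
    else
      aqW (a * q ^ (2 * (-(c.2 : ℤ) + 1 - (c.1 : ℤ) + (rcP P c : ℤ)))) q ((vP P c : ℤ) + 1)

/-- Heights of the staircase board `St_n = B(0,1,…,n-1)`. -/
def stH : ℕ → ℕ := fun i => i - 1

/-- `r_k^{(2)}(a,q;St_n)`. -/
def r2aq (a q : ℂ) (n k : ℕ) : ℂ :=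
  ∑ P ∈ filePl (ferrers n stH) k, ∏ c ∈ ferrers n stH, aqCellWt a q P c

/-- The 2-creation rook number `r_k^{(2)}(St_n)` of the staircase board. -/
def r2Nat (n k : ℕ) : ℕ :=
  ∑ P ∈ filePl (ferrers n stH) k,
    ∏ r ∈ Finset.Icc 1 n, (P.filter fun c => c.2 = r).card.factorial

/-! l-shifted boards and rook theory for matchings.
Cells are written `(i, j)` for row `i` and column `j` in the original labelling. -/

/-- `L j = l 1 + ⋯ + l j`. -/
def Lsum (l : ℕ → ℕ) (j : ℕ) : ℕ := ∑ s ∈ Finset.Icc 1 j, l s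

/-- The l-shifted skyline/Ferrers board `B(A 1, …, A N) ⊆ B_N^l`. -/
def lFerrers (N : ℕ) (l A : ℕ → ℕ) : Finset (ℕ × ℕ) :=
  (Finset.Icc 1 N).biUnion fun i =>
    (Finset.Icc 1 (A i)).image fun j =>
      (Lsum l N - Lsum l (N - i + 1) + 1, Lsum l N - Lsum l (N - i + 1) + 1 + j)

/-- Nonattacking condition for rook placements on shifted boards. -/
def nonatt (P : Finset (ℕ × ℕ)) : Prop :=
  ∀ c ∈ P, ∀ d ∈ P, c ≠ d → c.1 ≠ d.1 ∧ c.2 ≠ d.2 ∧ c.2 ≠ d.1 ∧ d.2 ≠ c.1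

/-- `M_k(B)`: placements of `k` nonattacking rooks on `B`. -/
def Mk (B : Finset (ℕ × ℕ)) (k : ℕ) : Finset (Finset (ℕ × ℕ)) :=
  B.powerset.filter fun P => P.card = k ∧ nonatt P

/-- A rook at `(i,j) ∈ P` cancels the cells `(i,s)` with `i < s < j` and the cells
`(t,j)` and `(t,i)` with `t < i`. -/
def cancelled (P : Finset (ℕ × ℕ)) (c : ℕ × ℕ) : Prop :=
  ∃ d ∈ P, (d.1 = c.1 ∧ d.1 < c.2 ∧ c.2 < d.2) ∨ (c.1 < d.1 ∧ (c.2 = d.2 ∨ c.2 = d.1))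

/-- The cells of `B` neither in `P` nor cancelled by a rook of `P`. -/
def uncancelled (B P : Finset (ℕ × ℕ)) : Finset (ℕ × ℕ) :=
  B.filter fun c => c ∉ P ∧ ¬cancelled P c

/-- `m_k(q;B) = Σ_P q^{u_B(P)}`. -/
def mq (q : ℂ) (B : Finset (ℕ × ℕ)) (k : ℕ) : ℂ :=
  ∑ P ∈ Mk B k, q ^ (uncancelled B P).card

/-- The w-row (bottom-to-top index) of the original row labelled `r` in `B_N^l`:
rows are labelled `L_N + 1 - L_{i'}` for the w-row `i'`. -/
def wRow (N : ℕ) (l : ℕ → ℕ) (r : ℕ) : ℕ :=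
  ((Finset.Icc 1 N).filter fun t => Lsum l t ≤ Lsum l N + 1 - r).card

/-- Number of rooks south-east of `c` both of whose cancelled columns are to the right of
the w-column of `c` (in original coordinates: row and column larger than those of `c`,
and the rook's own row label, as a column, also larger than the column of `c`). -/
def rse (P : Finset (ℕ × ℕ)) (c : ℕ × ℕ) : ℕ :=
  (P.filter fun d => c.1 < d.1 ∧ c.2 < d.2 ∧ c.2 < d.1).card

/-- Number of rooks south-east of `c` exactly one of whose cancelled columns is to the
right of the w-column of `c`. -/
def sse (P : Finset (ℕ × ℕ)) (c : ℕ × ℕ) : ℕ :=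
  (P.filter fun d => c.1 < d.1 ∧ c.2 < d.2 ∧ d.1 ≤ c.2).card

/-- The elliptic matchings number `m_k^{(l)}(a,b;q,p;B)`: for a cell of `B_N^l`
in original coordinates `(r,c)`, its w-coordinates are `i = wRow N l r` and
`j = L_N + 2 - c`, and the uncancelled cells get the small weight with argument
`i + j - 1 - l i - 2 r_{(i,j)}(P) - s_{(i,j)}(P)`. -/
def mEll (a b q p : ℂ) (N : ℕ) (l : ℕ → ℕ) (B : Finset (ℕ × ℕ)) (k : ℕ) : ℂ :=
  ∑ P ∈ Mk B k, ∏ c ∈ uncancelled B P,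
    ew a b q p ((wRow N l c.1 : ℤ) + ((Lsum l N : ℤ) + 2 - (c.2 : ℤ)) - 1
      - (l (wRow N l c.1) : ℤ) - 2 * (rse P c : ℤ) - (sse P c : ℤ))

/-- The a;q-analogue `m_k(a,q;B)` of the matchings number. -/
def mAq (a q : ℂ) (N : ℕ) (l : ℕ → ℕ) (B : Finset (ℕ × ℕ)) (k : ℕ) : ℂ :=
  ∑ P ∈ Mk B k, ∏ c ∈ uncancelled B P,
    waq a q ((wRow N l c.1 : ℤ) + ((Lsum l N : ℤ) + 2 - (c.2 : ℤ)) - 1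
      - (l (wRow N l c.1) : ℤ) - 2 * (rse P c : ℤ) - (sse P c : ℤ))


/-- Shift properties of the elliptic small and big weights. -/
theorem elliptic_weight_shifts (q a b p : ℂ) (hp : ‖p‖ < 1)
    (hq : q ≠ 0) (ha : a ≠ 0) (hb : b ≠ 0) (k n : ℤ)
    (h1 : theta (a * q ^ (2 * (k + n) - 1)) p ≠ 0)
    (h2 : theta (b * q ^ (k + n + 2)) p ≠ 0)
    (h3 : theta (a * q ^ (k + n) / b) p ≠ 0)
    (h4 : theta (a * q) p ≠ 0)
    (h5 : theta (a * q ^ (2 * k + 1)) p ≠ 0)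
    (h6 : theta (b * q ^ (k + 1)) p ≠ 0)
    (h7 : theta (b * q ^ (k + 2)) p ≠ 0)
    (h8 : theta (b * q ^ (k + n + 1)) p ≠ 0)
    (h9 : theta (a * q ^ (k - 1) / b) p ≠ 0)
    (h10 : theta (a * q ^ k / b) p ≠ 0)
    (h11 : theta (a * q ^ (k + n - 1) / b) p ≠ 0) :
    ew a b q p (k + n) = ew (a * q ^ (2 * k)) (b * q ^ k) q p n ∧
      eW a b q p (k + n) = eW a b q p k * eW (a * q ^ (2 * k)) (b * q ^ k) q p n := by
  have hA : ∀ (x : ℂ) (m r : ℤ), x * q ^ m * q ^ r = x * q ^ (m + r) := by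
    intro x m r; rw [mul_assoc, ← zpow_add₀ hq]
  have hB : ∀ (m r j : ℤ), a * q ^ m * q ^ r / (b * q ^ j) = a * q ^ (m + r - j) / b := by
    intro m r j
    rw [div_eq_div_iff (mul_ne_zero hb (zpow_ne_zero _ hq)) hb,
      show a * q ^ (m+r-j) * (b * q ^ j) = a * (q ^ (m+r-j) * q ^ j) * b by ring,
      ← zpow_add₀ hq, mul_assoc a, ← zpow_add₀ hq]
    ring_nf
  have hC : ∀ (m j : ℤ), a * q ^ m / (b * q ^ j) = a * q ^ (m - j) / b := by
    intro m j
    rw [div_eq_div_iff (mul_ne_zero hb (zpow_ne_zero _ hq)) hb,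
      show a * q ^ (m-j) * (b * q ^ j) = a * (q ^ (m-j) * q ^ j) * b by ring,
      ← zpow_add₀ hq]
    ring_nf
  have hD : ∀ (x : ℂ) (m : ℤ), x * q ^ m * q = x * q ^ (m + 1) := by
    intro x m; rw [mul_assoc, ← zpow_add_one₀ hq]
  constructor
  · simp only [ew, hD, hA, hB, hC,
      show (2*k+(2*n+1) : ℤ) = 2*(k+n)+1 by ring,
      show (2*k+(n-2)-k : ℤ) = k+n-2 by ring,
      show (2*k+(2*n-1) : ℤ) = 2*(k+n)-1 by ring,
      show (k+(n+2) : ℤ) = k+n+2 by ring,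
      show (2*k+n-k : ℤ) = k+n by ring]
  · simp only [eW, hD, hA, hB, hC,
      show (2*k+(1+2*n) : ℤ) = 1+2*(k+n) by ring,
      show (2*k+(-1)-k : ℤ) = k-1 by ring,
      show (2*k-k : ℤ) = k by ring,
      show (k+(n+1) : ℤ) = k+n+1 by ring,
      show (k+(n+2) : ℤ) = k+n+2 by ring,
      show (2*k+(n-1)-k : ℤ) = k+n-1 by ring,
      show (2*k+n-k : ℤ) = k+n by ring]
    nth_rewrite 1 [zpow_add₀ hq k n]
    rw [div_mul_div_comm, div_eq_div_iff
      (mul_ne_zero (mul_ne_zero (mul_ne_zero (mul_ne_zero h4 h8) h2) h11) h3)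
      (mul_ne_zero
        (mul_ne_zero (mul_ne_zero (mul_ne_zero (mul_ne_zero h4 h6) h7) h9) h10)
        (mul_ne_zero (mul_ne_zero (mul_ne_zero (mul_ne_zero h5 h8) h2) h11) h3))]
    ring

end EllRook
end
end

section
/- Let α be an integer and B = B(h_1,…,h_n) a Ferrers board. Then for every integer z, ∏_{j=1}^{n} [z + h_j + (j−1)(α−1)]_q = Σ_{k=0}^{n} R_k^{(α)}(q;B) · ∏_{i=1}^{n−k} [z + (i−1)(α−1)]_q. -/
open scoped BigOperators Classical

noncomputable section
namespace EllRook

/-! ### Auxiliary lemmas for the q-alpha factorization theorem -/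

lemma qInt_add (q : ℂ) (hq : q ≠ 0) (a b : ℤ) :
    qInt q a + q ^ a * qInt q b = qInt q (a + b) := by
  unfold qInt; rw [zpow_add₀ hq]; ring

lemma zpow_sum' (q : ℂ) (hq : q ≠ 0) (s : Finset ℕ) (f : ℕ → ℤ) :
    q ^ (∑ j ∈ s, f j) = ∏ j ∈ s, q ^ (f j) := by
  classical
  induction s using Finset.induction with
  | empty => simp
  | insert _ _ hx ih => rw [Finset.sum_insert hx, Finset.prod_insert hx, zpow_add₀ hq, ih]

lemma tele (q : ℂ) (hq : q ≠ 0) (H : ℕ) (w : ℕ → ℤ) :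
    ∑ j ∈ Finset.Icc 1 H, qInt q (w j) * q ^ (∑ j' ∈ Finset.Ioc j H, w j')
      = qInt q (∑ j ∈ Finset.Icc 1 H, w j) := by
  induction H with
  | zero => simp [qInt]
  | succ H ih =>
    rw [Finset.sum_Icc_succ_top (by omega)]
    have e1 : ∀ j ∈ Finset.Icc 1 H,
        qInt q (w j) * q ^ (∑ j' ∈ Finset.Ioc j (H+1), w j')
        = (qInt q (w j) * q ^ (∑ j' ∈ Finset.Ioc j H, w j')) * q ^ (w (H+1)) := by
      intro j hj
      simp only [Finset.mem_Icc] at hj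
      have : Finset.Ioc j (H+1) = insert (H+1) (Finset.Ioc j H) := by
        ext x; simp only [Finset.mem_Ioc, Finset.mem_insert]; omega
      rw [this, Finset.sum_insert (by simp), zpow_add₀ hq]
      ring
    rw [Finset.sum_congr rfl e1, ← Finset.sum_mul, ih]
    have he : Finset.Ioc (H+1) (H+1) = ∅ := by simp
    rw [he]
    simp only [Finset.sum_empty, zpow_zero, mul_one]
    rw [Finset.sum_Icc_succ_top (by omega), add_comm, mul_comm, qInt_add q hq, add_comm]

lemma mem_ferrers {n : ℕ} {h : ℕ → ℕ} {c : ℕ × ℕ} :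
    c ∈ ferrers n h ↔ (1 ≤ c.1 ∧ c.1 ≤ n) ∧ 1 ≤ c.2 ∧ c.2 ≤ h c.1 := by
  unfold ferrers
  simp only [Finset.mem_filter, Finset.mem_product, Finset.mem_Icc]
  constructor
  · rintro ⟨⟨⟨a, b⟩, ⟨d, _⟩⟩, f⟩; exact ⟨⟨a, b⟩, d, f⟩
  · rintro ⟨⟨a, b⟩, d, f⟩
    exact ⟨⟨⟨a, b⟩, d, le_trans f (Finset.le_sup (Finset.mem_Icc.mpr ⟨a, b⟩))⟩, f⟩

lemma ferrers_succ (n : ℕ) (h : ℕ → ℕ) :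
    ferrers (n + 1) h
      = ferrers n h ∪ (Finset.Icc 1 (h (n + 1))).image (fun j => (n + 1, j)) := by
  ext c
  simp only [mem_ferrers, Finset.mem_union, Finset.mem_image, Finset.mem_Icc]
  constructor
  · rintro ⟨⟨a, b⟩, d, f⟩
    rcases Nat.lt_or_ge c.1 (n + 1) with hlt | hge
    · exact Or.inl ⟨⟨a, by omega⟩, d, f⟩
    · right
      have hc1 : c.1 = n + 1 := by omega
      exact ⟨c.2, ⟨d, by rw [← hc1]; exact f⟩, Prod.ext hc1.symm rfl⟩
  · rintro (⟨⟨a, b⟩, d, f⟩ | ⟨j, ⟨hj1, hj2⟩, rfl⟩)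
    · exact ⟨⟨a, by omega⟩, d, f⟩
    · exact ⟨⟨by omega, le_refl _⟩, hj1, hj2⟩

lemma ferrers_disj (n : ℕ) (h : ℕ → ℕ) :
    Disjoint (ferrers n h) ((Finset.Icc 1 (h (n + 1))).image (fun j => (n + 1, j))) := by
  rw [Finset.disjoint_left]
  rintro c hc hc'
  simp only [Finset.mem_image, Finset.mem_Icc] at hc'
  obtain ⟨j, _, rfl⟩ := hc'
  have := (mem_ferrers.mp hc).1.2
  omega

lemma mem_filePl {B : Finset (ℕ × ℕ)} {k : ℕ} {P : Finset (ℕ × ℕ)} :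
    P ∈ filePl B k ↔ P ⊆ B ∧ P.card = k ∧ ∀ c ∈ P, ∀ d ∈ P, c.1 = d.1 → c = d := by
  unfold filePl
  simp [Finset.mem_filter, Finset.mem_powerset, and_assoc]

lemma cols_le {n : ℕ} {h : ℕ → ℕ} {P : Finset (ℕ × ℕ)} (hsub : P ⊆ ferrers n h) :
    ∀ d ∈ P, d.1 ≤ n := fun d hd => (mem_ferrers.mp (hsub hd)).1.2

lemma filePl_zero (B : Finset (ℕ × ℕ)) : filePl B 0 = {∅} := by
  ext P
  simp only [mem_filePl, Finset.mem_singleton, Finset.card_eq_zero]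
  constructor
  · rintro ⟨_, h2, _⟩; exact h2
  · rintro rfl
    exact ⟨Finset.empty_subset _, rfl, by intro c hc; simp at hc⟩

lemma filePl_card_le {n : ℕ} {h : ℕ → ℕ} {k : ℕ} {P : Finset (ℕ × ℕ)}
    (hP : P ∈ filePl (ferrers n h) k) : k ≤ n := by
  obtain ⟨hsub, hcard, hfile⟩ := mem_filePl.mp hP
  have hinj : Set.InjOn Prod.fst P := fun a ha b hb hab => hfile a ha b hb hab
  have h1 : (P.image Prod.fst).card = P.card := Finset.card_image_of_injOn hinj
  have h2 : P.image Prod.fst ⊆ Finset.Icc 1 n := by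
    intro i hi
    simp only [Finset.mem_image] at hi
    obtain ⟨c, hc, rfl⟩ := hi
    exact Finset.mem_Icc.mpr (mem_ferrers.mp (hsub hc)).1
  have := Finset.card_le_card h2
  simp only [Nat.card_Icc] at this
  omega

lemma Rq_eq_zero (q : ℂ) (α : ℤ) {n k : ℕ} (h : ℕ → ℕ) (hk : n < k) :
    Rq q α n h k = 0 := by
  unfold Rq
  rw [Finset.sum_eq_zero]
  intro P hP
  exact absurd (filePl_card_le hP) (by omega)

lemma filePl_succ (n : ℕ) (h : ℕ → ℕ) (k : ℕ) :
    filePl (ferrers (n + 1) h) (k + 1)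
      = filePl (ferrers n h) (k + 1)
        ∪ ((filePl (ferrers n h) k ×ˢ Finset.Icc 1 (h (n + 1))).image
            fun x => insert (n + 1, x.2) x.1) := by
  ext P
  simp only [Finset.mem_union, Finset.mem_image, Finset.mem_product]
  constructor
  · intro hP
    obtain ⟨hsub, hcard, hfile⟩ := mem_filePl.mp hP
    by_cases hcol : ∀ c ∈ P, c.1 ≤ n
    · left
      refine mem_filePl.mpr ⟨fun c hc => ?_, hcard, hfile⟩
      have hm := mem_ferrers.mp (hsub hc)
      exact mem_ferrers.mpr ⟨⟨hm.1.1, hcol c hc⟩, hm.2⟩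
    · right
      push_neg at hcol
      obtain ⟨c, hcP, hcn⟩ := hcol
      have hm := mem_ferrers.mp (hsub hcP)
      have hc1 : c.1 = n + 1 := by omega
      refine ⟨(P.erase c, c.2), ⟨?_, ?_⟩, ?_⟩
      · refine mem_filePl.mpr ⟨?_, ?_, ?_⟩
        · intro d hd
          have hdP := Finset.mem_of_mem_erase hd
          have hdm := mem_ferrers.mp (hsub hdP)
          have hdn : d.1 ≤ n := by
            by_contra hdn'
            have hd1 : d.1 = c.1 := by omega
            exact (Finset.ne_of_mem_erase hd) (hfile d hdP c hcP hd1)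
          exact mem_ferrers.mpr ⟨⟨hdm.1.1, hdn⟩, hdm.2⟩
        · rw [Finset.card_erase_of_mem hcP, hcard]; omega
        · intro a ha b hb hab
          exact hfile a (Finset.mem_of_mem_erase ha) b (Finset.mem_of_mem_erase hb) hab
      · rw [Finset.mem_Icc]
        refine ⟨hm.2.1, ?_⟩
        rw [← hc1]; exact hm.2.2
      · have hceq : ((n + 1 : ℕ), c.2) = c := Prod.ext hc1.symm rfl
        rw [hceq, Finset.insert_erase hcP]
  · rintro (hP | ⟨⟨P', j⟩, ⟨hP', hj⟩, rfl⟩)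
    · obtain ⟨hsub, hcard, hfile⟩ := mem_filePl.mp hP
      refine mem_filePl.mpr ⟨fun c hc => ?_, hcard, hfile⟩
      have hm := mem_ferrers.mp (hsub hc)
      exact mem_ferrers.mpr ⟨⟨hm.1.1, by omega⟩, hm.2⟩
    · obtain ⟨hsub, hcard, hfile⟩ := mem_filePl.mp hP'
      simp only [Finset.mem_Icc] at hj
      have hcle := cols_le hsub
      have hnotmem : ((n + 1 : ℕ), j) ∉ P' := fun hmem => by
        have := hcle _ hmem; simp only at this; omega
      refine mem_filePl.mpr ⟨?_, ?_, ?_⟩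
      · intro d hd
        rcases Finset.mem_insert.mp hd with rfl | hd'
        · exact mem_ferrers.mpr ⟨⟨by omega, le_refl _⟩, hj.1, hj.2⟩
        · have hm := mem_ferrers.mp (hsub hd')
          exact mem_ferrers.mpr ⟨⟨hm.1.1, by omega⟩, hm.2⟩
      · rw [Finset.card_insert_of_notMem hnotmem, hcard]
      · intro a ha b hb hab
        rcases Finset.mem_insert.mp ha with rfl | ha' <;>
          rcases Finset.mem_insert.mp hb with rfl | hb'
        · rfl
        · exfalso; have := hcle b hb'; simp only at hab; omega
        · exfalso; have := hcle a ha'; simp only at hab; omega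
        · exact hfile a ha' b hb' hab

lemma filePl_succ_disj (n : ℕ) (h : ℕ → ℕ) (k : ℕ) :
    Disjoint (filePl (ferrers n h) (k + 1))
      ((filePl (ferrers n h) k ×ˢ Finset.Icc 1 (h (n + 1))).image
        fun x => insert (n + 1, x.2) x.1) := by
  rw [Finset.disjoint_right]
  rintro P hP hP'
  simp only [Finset.mem_image, Finset.mem_product] at hP
  obtain ⟨⟨P', j⟩, ⟨_, _⟩, rfl⟩ := hP
  have hsub := (mem_filePl.mp hP').1
  have := (mem_ferrers.mp (hsub (Finset.mem_insert_self _ _))).1.2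
  simp only at this
  omega

lemma insert_injOn (n : ℕ) (h : ℕ → ℕ) (k : ℕ) :
    ∀ x ∈ filePl (ferrers n h) k ×ˢ Finset.Icc 1 (h (n + 1)),
      ∀ y ∈ filePl (ferrers n h) k ×ˢ Finset.Icc 1 (h (n + 1)),
        insert ((n + 1 : ℕ), x.2) x.1 = insert ((n + 1 : ℕ), y.2) y.1 → x = y := by
  rintro ⟨P, j⟩ hx ⟨P', j'⟩ hy heq
  simp only [Finset.mem_product] at hx hy
  have hPc := cols_le (mem_filePl.mp hx.1).1
  have hP'c := cols_le (mem_filePl.mp hy.1).1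
  have hnm : ((n + 1 : ℕ), j) ∉ P := fun hm => by have := hPc _ hm; simp only at this; omega
  have hnm' : ((n + 1 : ℕ), j') ∉ P' := fun hm => by have := hP'c _ hm; simp only at this; omega
  have hjj : j = j' := by
    have hmm : ((n + 1 : ℕ), j') ∈ insert ((n + 1 : ℕ), j) P := by
      rw [heq]; exact Finset.mem_insert_self _ _
    rcases Finset.mem_insert.mp hmm with heq2 | hmem
    · exact (Prod.ext_iff.mp heq2).2.symm
    · exact absurd (hPc _ hmem) (by simp only; omega)
  subst hjj
  have h1 := congrArg (fun s => Finset.erase s ((n + 1 : ℕ), j)) heq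
  simp only [Finset.erase_insert hnm, Finset.erase_insert hnm'] at h1
  rw [Prod.mk.injEq]
  exact ⟨h1, rfl⟩

/-- number of cells of `P` in row `j`. -/
def vrow (P : Finset (ℕ × ℕ)) (j : ℕ) : ℕ := (P.filter fun d => d.2 = j).card

lemma vP_insert_left {P : Finset (ℕ × ℕ)} {c x : ℕ × ℕ} (hx : ¬ x.1 < c.1) :
    vP (insert x P) c = vP P c := by
  unfold vP
  rw [Finset.filter_insert, if_neg (fun hc => hx hc.1)]

lemma qCellWt_insert_left (q : ℂ) (α : ℤ) {P : Finset (ℕ × ℕ)} {c x : ℕ × ℕ}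
    (hx : c.1 < x.1) :
    qCellWt q α (insert x P) c = qCellWt q α P c := by
  unfold qCellWt
  have h1 : (∃ d ∈ insert x P, d.1 = c.1 ∧ c.2 < d.2) ↔ ∃ d ∈ P, d.1 = c.1 ∧ c.2 < d.2 := by
    constructor
    · rintro ⟨d, hd, hd1, hd2⟩
      rcases Finset.mem_insert.mp hd with rfl | hd'
      · omega
      · exact ⟨d, hd', hd1, hd2⟩
    · rintro ⟨d, hd, hd2⟩
      exact ⟨d, Finset.mem_insert_of_mem hd, hd2⟩
  have h2 : (c ∈ insert x P) ↔ c ∈ P := by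
    rw [Finset.mem_insert]
    constructor
    · rintro (rfl | hc)
      · omega
      · exact hc
    · exact Or.inr
  rw [vP_insert_left (by omega)]
  simp only [h1, h2]

lemma vP_top {n : ℕ} {P : Finset (ℕ × ℕ)} (hcols : ∀ d ∈ P, d.1 ≤ n) (j : ℕ) :
    vP P (n + 1, j) = vrow P j := by
  unfold vP vrow
  congr 1
  apply Finset.filter_congr
  intro d hd
  have := hcols d hd
  simp only
  constructor
  · exact fun hc => hc.2
  · exact fun hc => ⟨by omega, hc⟩

lemma qCellWt_top_empty (q : ℂ) (α : ℤ) {n : ℕ} {P : Finset (ℕ × ℕ)}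
    (hcols : ∀ d ∈ P, d.1 ≤ n) (j : ℕ) :
    qCellWt q α P (n + 1, j) = q ^ ((α - 1) * (vrow P j : ℤ) + 1) := by
  unfold qCellWt
  rw [if_neg, if_neg, vP_top hcols]
  · intro hm
    have := hcols _ hm
    simp only at this
    omega
  · rintro ⟨d, hd, hd1, _⟩
    have := hcols d hd
    simp only at hd1
    omega

lemma qCellWt_top_rook (q : ℂ) (α : ℤ) {n : ℕ} {P : Finset (ℕ × ℕ)}
    (hcols : ∀ d ∈ P, d.1 ≤ n) (j j' : ℕ) :
    qCellWt q α (insert (n + 1, j) P) (n + 1, j')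
      = if j' < j then 1
        else if j' = j then qInt q ((α - 1) * (vrow P j' : ℤ) + 1)
        else q ^ ((α - 1) * (vrow P j' : ℤ) + 1) := by
  have hv : vP (insert ((n + 1 : ℕ), j) P) (n + 1, j') = vrow P j' := by
    rw [vP_insert_left (by simp only; omega), vP_top hcols]
  have hex : (∃ d ∈ insert ((n + 1 : ℕ), j) P, d.1 = (n + 1 : ℕ) ∧ j' < d.2) ↔ j' < j := by
    constructor
    · rintro ⟨d, hd, hd1, hd2⟩
      rcases Finset.mem_insert.mp hd with rfl | hd'
      · simpa using hd2
      · have := hcols d hd'; omega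
    · intro hlt
      exact ⟨(n + 1, j), Finset.mem_insert_self _ _, rfl, hlt⟩
  have hmem : ((n + 1 : ℕ), j') ∈ insert ((n + 1 : ℕ), j) P ↔ j' = j := by
    rw [Finset.mem_insert]
    constructor
    · rintro (heq | hm)
      · exact (Prod.ext_iff.mp heq).2
      · have := hcols _ hm; simp only at this; omega
    · rintro rfl; exact Or.inl rfl
  unfold qCellWt
  simp only [hex, hmem, hv]

lemma prod_col_rook_abs (q : ℂ) (hq : q ≠ 0) (H j : ℕ) (hj1 : 1 ≤ j) (hj2 : j ≤ H)
    (w : ℕ → ℤ) :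
    (∏ j' ∈ Finset.Icc 1 H,
        (if j' < j then 1 else if j' = j then qInt q (w j') else q ^ (w j') : ℂ))
      = qInt q (w j) * q ^ (∑ j' ∈ Finset.Ioc j H, w j') := by
  have hsplit : Finset.Icc 1 H = Finset.Icc 1 j ∪ Finset.Ioc j H := by
    ext a
    simp only [Finset.mem_Icc, Finset.mem_union, Finset.mem_Ioc]
    omega
  have hdisj : Disjoint (Finset.Icc 1 j) (Finset.Ioc j H) := by
    rw [Finset.disjoint_left]
    intro a ha ha'
    simp only [Finset.mem_Icc] at ha
    simp only [Finset.mem_Ioc] at ha'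
    omega
  rw [hsplit, Finset.prod_union hdisj]
  congr 1
  · rw [Finset.prod_eq_single j]
    · rw [if_neg (by omega), if_pos rfl]
    · intro b hb hbj
      simp only [Finset.mem_Icc] at hb
      rw [if_pos (by omega)]
    · intro hj
      exact absurd (Finset.mem_Icc.mpr ⟨hj1, le_refl j⟩) hj
  · rw [zpow_sum' q hq]
    apply Finset.prod_congr rfl
    intro b hb
    simp only [Finset.mem_Ioc] at hb
    rw [if_neg (by omega), if_neg (by omega)]

lemma sum_vrow_eq_card {H : ℕ} {P : Finset (ℕ × ℕ)}
    (hrows : ∀ d ∈ P, d.2 ∈ Finset.Icc 1 H) :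
    ∑ j ∈ Finset.Icc 1 H, vrow P j = P.card :=
  (Finset.card_eq_sum_card_fiberwise hrows).symm

lemma sum_w_eq {H : ℕ} {α : ℤ} {P : Finset (ℕ × ℕ)} {k : ℕ} (hcard : P.card = k)
    (hrows : ∀ d ∈ P, d.2 ∈ Finset.Icc 1 H) :
    ∑ j ∈ Finset.Icc 1 H, ((α - 1) * (vrow P j : ℤ) + 1)
      = (H : ℤ) + (α - 1) * (k : ℤ) := by
  rw [Finset.sum_add_distrib, ← Finset.mul_sum]
  have hv : ∑ j ∈ Finset.Icc 1 H, (vrow P j : ℤ) = (k : ℤ) := by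
    rw [← Nat.cast_sum]
    norm_cast
    rw [sum_vrow_eq_card hrows, hcard]
  rw [hv]
  simp only [Finset.sum_const, Nat.card_Icc, nsmul_eq_mul, mul_one]
  push_cast
  ring

lemma prod_ferrers_succ_empty (q : ℂ) (hq : q ≠ 0) (α : ℤ) (n : ℕ) (h : ℕ → ℕ)
    (hmn : ∀ i, 1 ≤ i → i ≤ n → h i ≤ h (n + 1))
    {P : Finset (ℕ × ℕ)} {k : ℕ} (hP : P ∈ filePl (ferrers n h) k) :
    ∏ c ∈ ferrers (n + 1) h, qCellWt q α P c
      = (∏ c ∈ ferrers n h, qCellWt q α P c)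
          * q ^ ((h (n + 1) : ℤ) + (α - 1) * (k : ℤ)) := by
  obtain ⟨hsub, hcard, hfile⟩ := mem_filePl.mp hP
  have hcols := cols_le hsub
  have hrows : ∀ d ∈ P, d.2 ∈ Finset.Icc 1 (h (n + 1)) := by
    intro d hd
    have hm := mem_ferrers.mp (hsub hd)
    have := hmn d.1 hm.1.1 hm.1.2
    rw [Finset.mem_Icc]
    omega
  rw [ferrers_succ, Finset.prod_union (ferrers_disj n h),
    Finset.prod_image (fun a _ b _ hab => (Prod.ext_iff.mp hab).2)]
  congr 1
  have e : ∀ j ∈ Finset.Icc 1 (h (n + 1)),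
      qCellWt q α P (n + 1, j) = q ^ ((α - 1) * (vrow P j : ℤ) + 1) :=
    fun j _ => qCellWt_top_empty q α hcols j
  rw [Finset.prod_congr rfl e, ← zpow_sum' q hq, sum_w_eq hcard hrows]

lemma sum_prod_ferrers_succ_rook (q : ℂ) (hq : q ≠ 0) (α : ℤ) (n : ℕ) (h : ℕ → ℕ)
    (hmn : ∀ i, 1 ≤ i → i ≤ n → h i ≤ h (n + 1))
    {P : Finset (ℕ × ℕ)} {k : ℕ} (hP : P ∈ filePl (ferrers n h) k) :
    ∑ j ∈ Finset.Icc 1 (h (n + 1)),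
        ∏ c ∈ ferrers (n + 1) h, qCellWt q α (insert (n + 1, j) P) c
      = (∏ c ∈ ferrers n h, qCellWt q α P c)
          * qInt q ((h (n + 1) : ℤ) + (α - 1) * (k : ℤ)) := by
  obtain ⟨hsub, hcard, hfile⟩ := mem_filePl.mp hP
  have hcols := cols_le hsub
  have hrows : ∀ d ∈ P, d.2 ∈ Finset.Icc 1 (h (n + 1)) := by
    intro d hd
    have hm := mem_ferrers.mp (hsub hd)
    have := hmn d.1 hm.1.1 hm.1.2
    rw [Finset.mem_Icc]
    omega
  have e : ∀ j ∈ Finset.Icc 1 (h (n + 1)),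
      ∏ c ∈ ferrers (n + 1) h, qCellWt q α (insert (n + 1, j) P) c
        = (∏ c ∈ ferrers n h, qCellWt q α P c)
            * (qInt q ((α - 1) * (vrow P j : ℤ) + 1)
                * q ^ (∑ j' ∈ Finset.Ioc j (h (n + 1)), ((α - 1) * (vrow P j' : ℤ) + 1))) := by
    intro j hj
    simp only [Finset.mem_Icc] at hj
    rw [ferrers_succ, Finset.prod_union (ferrers_disj n h),
      Finset.prod_image (fun a _ b _ hab => (Prod.ext_iff.mp hab).2)]
    congr 1
    · apply Finset.prod_congr rfl
      intro c hc
      exact qCellWt_insert_left q α (by have := (mem_ferrers.mp hc).1.2; simp only; omega)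
    · have e2 : ∀ j' ∈ Finset.Icc 1 (h (n + 1)),
          qCellWt q α (insert (n + 1, j) P) (n + 1, j')
            = if j' < j then 1
              else if j' = j then qInt q ((α - 1) * (vrow P j' : ℤ) + 1)
              else q ^ ((α - 1) * (vrow P j' : ℤ) + 1) :=
        fun j' _ => qCellWt_top_rook q α hcols j j'
      rw [Finset.prod_congr rfl e2, prod_col_rook_abs q hq _ j hj.1 hj.2]
  rw [Finset.sum_congr rfl e, ← Finset.mul_sum,
    tele q hq (h (n + 1)) (fun j => (α - 1) * (vrow P j : ℤ) + 1),
    sum_w_eq hcard hrows]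

lemma Rq_succ_zero (q : ℂ) (hq : q ≠ 0) (α : ℤ) (n : ℕ) (h : ℕ → ℕ)
    (hmn : ∀ i, 1 ≤ i → i ≤ n → h i ≤ h (n + 1)) :
    Rq q α (n + 1) h 0 = Rq q α n h 0 * q ^ ((h (n + 1) : ℤ)) := by
  have h0 : (∅ : Finset (ℕ × ℕ)) ∈ filePl (ferrers n h) 0 := by
    rw [filePl_zero]; exact Finset.mem_singleton_self _
  unfold Rq
  rw [filePl_zero, filePl_zero, Finset.sum_singleton, Finset.sum_singleton,
    prod_ferrers_succ_empty q hq α n h hmn h0]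
  norm_num

lemma Rq_succ (q : ℂ) (hq : q ≠ 0) (α : ℤ) (n : ℕ) (h : ℕ → ℕ)
    (hmn : ∀ i, 1 ≤ i → i ≤ n → h i ≤ h (n + 1)) (k : ℕ) :
    Rq q α (n + 1) h (k + 1)
      = Rq q α n h (k + 1) * q ^ ((h (n + 1) : ℤ) + (α - 1) * ((k + 1 : ℕ) : ℤ))
        + Rq q α n h k * qInt q ((h (n + 1) : ℤ) + (α - 1) * (k : ℤ)) := by
  unfold Rq
  rw [filePl_succ, Finset.sum_union (filePl_succ_disj n h k),
    Finset.sum_image (insert_injOn n h k), Finset.sum_product]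
  congr 1
  · rw [Finset.sum_mul]
    apply Finset.sum_congr rfl
    intro P hP
    exact prod_ferrers_succ_empty q hq α n h hmn hP
  · rw [Finset.sum_mul]
    apply Finset.sum_congr rfl
    intro P hP
    exact sum_prod_ferrers_succ_rook q hq α n h hmn hP


/-- Abbreviation for the falling-type product on the right-hand side. -/
def Phi (q : ℂ) (α z : ℤ) (m : ℕ) : ℂ :=
  ∏ i ∈ Finset.Icc 1 m, qInt q (z + ((i : ℤ) - 1) * (α - 1))

lemma Phi_zero (q : ℂ) (α z : ℤ) : Phi q α z 0 = 1 := by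
  unfold Phi
  rw [Finset.Icc_eq_empty (by omega), Finset.prod_empty]

lemma Phi_succ (q : ℂ) (α z : ℤ) (m : ℕ) :
    Phi q α z (m + 1) = Phi q α z m * qInt q (z + (m : ℤ) * (α - 1)) := by
  unfold Phi
  rw [Finset.prod_Icc_succ_top (by omega)]
  congr 2
  push_cast
  ring

/-- q-analogue of the alpha-factorization theorem. -/
theorem q_alpha_factorization (q : ℂ) (hq : q ≠ 0) (hq1 : q ≠ 1)
    (α : ℤ) (n : ℕ) (h : ℕ → ℕ)
    (hmono : ∀ i j, 1 ≤ i → i ≤ j → j ≤ n → h i ≤ h j)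
    (z : ℤ) :
    ∏ j ∈ Finset.Icc 1 n, qInt q (z + (h j : ℤ) + ((j : ℤ) - 1) * (α - 1))
      = ∑ k ∈ Finset.range (n + 1),
          Rq q α n h k
            * ∏ i ∈ Finset.Icc 1 (n - k), qInt q (z + ((i : ℤ) - 1) * (α - 1)) := by
  show _ = ∑ k ∈ Finset.range (n + 1), Rq q α n h k * Phi q α z (n - k)
  induction n with
  | zero =>
    have hfe : ferrers 0 h = ∅ := by
      ext c
      simp only [mem_ferrers, Finset.notMem_empty, iff_false]
      omega
    have hR : Rq q α 0 h 0 = 1 := by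
      unfold Rq
      rw [filePl_zero, Finset.sum_singleton, hfe, Finset.prod_empty]
    rw [Finset.Icc_eq_empty (by omega), Finset.prod_empty, Finset.sum_range_one, hR,
      Nat.sub_self, Phi_zero, one_mul]
  | succ n ih =>
    have hm1 : ∀ i, 1 ≤ i → i ≤ n → h i ≤ h (n + 1) :=
      fun i a b => hmono i (n + 1) a (by omega) (le_refl _)
    have ih' := ih (fun i j a b c => hmono i j a b (by omega))
    have hrq0 := Rq_succ_zero q hq α n h hm1
    have hrqs := Rq_succ q hq α n h hm1
    have key : ∀ k : ℕ, k ≤ n →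
        Rq q α n h k * q ^ ((h (n + 1) : ℤ) + (α - 1) * (k : ℤ)) * Phi q α z (n + 1 - k)
          + Rq q α n h k * qInt q ((h (n + 1) : ℤ) + (α - 1) * (k : ℤ)) * Phi q α z (n - k)
        = Rq q α n h k * Phi q α z (n - k)
            * qInt q (z + (h (n + 1) : ℤ) + (n : ℤ) * (α - 1)) := by
      intro k hk
      have h1 : n + 1 - k = (n - k) + 1 := by omega
      have h2 : Phi q α z ((n - k) + 1)
          = Phi q α z (n - k) * qInt q (z + ((n : ℤ) - (k : ℤ)) * (α - 1)) := by
        rw [Phi_succ, Nat.cast_sub hk]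
      rw [h1, h2,
        show z + (h (n + 1) : ℤ) + (n : ℤ) * (α - 1)
            = ((h (n + 1) : ℤ) + (α - 1) * (k : ℤ))
              + (z + ((n : ℤ) - (k : ℤ)) * (α - 1)) by ring,
        ← qInt_add q hq ((h (n + 1) : ℤ) + (α - 1) * (k : ℤ))
          (z + ((n : ℤ) - (k : ℤ)) * (α - 1))]
      ring
    -- rewrite the right-hand side first
    rw [Finset.sum_range_succ']
    simp only [hrqs, hrq0]
    have hsplit : ∀ k ∈ Finset.range (n + 1),
        (Rq q α n h (k + 1) * q ^ ((h (n + 1) : ℤ) + (α - 1) * ((k + 1 : ℕ) : ℤ))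
            + Rq q α n h k * qInt q ((h (n + 1) : ℤ) + (α - 1) * (k : ℤ)))
            * Phi q α z (n + 1 - (k + 1))
        = Rq q α n h (k + 1) * q ^ ((h (n + 1) : ℤ) + (α - 1) * ((k + 1 : ℕ) : ℤ))
              * Phi q α z (n + 1 - (k + 1))
          + Rq q α n h k * qInt q ((h (n + 1) : ℤ) + (α - 1) * (k : ℤ))
              * Phi q α z (n - k) := by
      intro k hk
      have he : n + 1 - (k + 1) = n - k := by omega
      rw [he]
      ring
    rw [Finset.sum_congr rfl hsplit, Finset.sum_add_distrib, add_right_comm]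
    have hshift :
        (∑ k ∈ Finset.range (n + 1),
            Rq q α n h (k + 1) * q ^ ((h (n + 1) : ℤ) + (α - 1) * ((k + 1 : ℕ) : ℤ))
              * Phi q α z (n + 1 - (k + 1)))
          + Rq q α n h 0 * q ^ ((h (n + 1) : ℤ)) * Phi q α z (n + 1 - 0)
        = ∑ k ∈ Finset.range (n + 1),
            Rq q α n h k * q ^ ((h (n + 1) : ℤ) + (α - 1) * ((k : ℕ) : ℤ))
              * Phi q α z (n + 1 - k) := by
      have h0 : Rq q α n h 0 * q ^ ((h (n + 1) : ℤ)) * Phi q α z (n + 1 - 0)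
          = Rq q α n h 0 * q ^ ((h (n + 1) : ℤ) + (α - 1) * ((0 : ℕ) : ℤ))
              * Phi q α z (n + 1 - 0) := by
        norm_num
      rw [h0, ← Finset.sum_range_succ'
        (fun k => Rq q α n h k * q ^ ((h (n + 1) : ℤ) + (α - 1) * ((k : ℕ) : ℤ))
          * Phi q α z (n + 1 - k)) (n + 1),
        Finset.sum_range_succ, Rq_eq_zero q α h (by omega : n < n + 1)]
      simp
    rw [hshift, ← Finset.sum_add_distrib]
    have hfin : ∀ k ∈ Finset.range (n + 1),
        Rq q α n h k * q ^ ((h (n + 1) : ℤ) + (α - 1) * ((k : ℕ) : ℤ))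
            * Phi q α z (n + 1 - k)
          + Rq q α n h k * qInt q ((h (n + 1) : ℤ) + (α - 1) * (k : ℤ))
              * Phi q α z (n - k)
        = Rq q α n h k * Phi q α z (n - k)
            * qInt q (z + (h (n + 1) : ℤ) + (n : ℤ) * (α - 1)) := by
      intro k hk
      simp only [Finset.mem_range] at hk
      exact key k (by omega)
    rw [Finset.sum_congr rfl hfin, ← Finset.sum_mul]
    -- now the left-hand side
    rw [Finset.prod_Icc_succ_top (by omega : 1 ≤ n + 1), ih',
      show z + (h (n + 1) : ℤ) + (((n + 1 : ℕ) : ℤ) - 1) * (α - 1)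
          = z + (h (n + 1) : ℤ) + (n : ℤ) * (α - 1) by push_cast; ring]

end EllRook
end
end

section
/- For all integers n ≥ 1 and k ≥ 0, the 2-creation rook number of the staircase board equals the k-matching number of the complete graph on n+k−1 vertices: r_k^{(2)}(St_n) = binomial(n+k−1, 2k) · (2k)! / (k! · 2^k). -/
open scoped BigOperators Classical

noncomputable section
namespace EllRook

lemma mem_ferrers_st {n : ℕ} {c : ℕ × ℕ} :
    c ∈ ferrers n stH ↔ c.1 ≤ n ∧ 1 ≤ c.2 ∧ c.2 + 1 ≤ c.1 := by
  rw [mem_ferrers]; unfold stH; omega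

def wt (n : ℕ) (P : Finset (ℕ × ℕ)) : ℕ :=
  ∏ r ∈ Finset.Icc 1 n, (P.filter fun c => c.2 = r).card.factorial

lemma r2Nat_eq (n k : ℕ) : r2Nat n k = ∑ P ∈ filePl (ferrers n stH) k, wt n P := rfl

lemma wt_stable {P : Finset (ℕ × ℕ)} {m n : ℕ} (hmn : n ≤ m) (hP : ∀ c ∈ P, c.2 ≤ n) :
    wt m P = wt n P := by
  unfold wt
  refine (Finset.prod_subset (Finset.Icc_subset_Icc_right hmn) ?_).symm
  intro r hr hrn
  have he : P.filter (fun c => c.2 = r) = ∅ := by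
    refine Finset.filter_eq_empty_iff.mpr ?_
    intro c hc hcr
    have := hP c hc
    simp only [Finset.mem_Icc] at hr hrn
    omega
  simp [he]

lemma wt_insert {n : ℕ} {P : Finset (ℕ × ℕ)} {c : ℕ × ℕ} (hc : c ∉ P)
    (hj : c.2 ∈ Finset.Icc 1 n) :
    wt n (insert c P) = ((P.filter fun d => d.2 = c.2).card + 1) * wt n P := by
  unfold wt
  rw [← Finset.mul_prod_erase _ _ hj,
    ← Finset.mul_prod_erase _ (fun r => (P.filter fun d => d.2 = r).card.factorial) hj]
  have h2 : (insert c P).filter (fun d => d.2 = c.2) = insert c (P.filter fun d => d.2 = c.2) := by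
    rw [Finset.filter_insert, if_pos rfl]
  have hcf : c ∉ P.filter (fun d => d.2 = c.2) := fun h => hc (Finset.mem_filter.mp h).1
  rw [h2, Finset.card_insert_of_notMem hcf, Nat.factorial_succ]
  have h1 : ∀ r ∈ (Finset.Icc 1 n).erase c.2,
      ((insert c P).filter fun d => d.2 = r).card.factorial
        = (P.filter fun d => d.2 = r).card.factorial := by
    intro r hr
    have hne : ¬ (c.2 = r) := fun h => (Finset.mem_erase.mp hr).1 h.symm
    rw [Finset.filter_insert, if_neg hne]
  rw [Finset.prod_congr rfl h1]
  ring


lemma rows_le {n : ℕ} {P : Finset (ℕ × ℕ)} (hP : P ⊆ ferrers n stH) :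
    ∀ c ∈ P, c.2 ≤ n := by
  intro c hc
  have := mem_ferrers_st.mp (hP hc)
  omega

lemma r2Nat_rec (n k : ℕ) :
    r2Nat (n+1) (k+1) = r2Nat n (k+1) + (n + k) * r2Nat n k := by
  classical
  set B := ferrers n stH with hB
  set B' := ferrers (n+1) stH with hB'
  have hmemB : ∀ c : ℕ × ℕ, c ∈ B ↔ c.1 ≤ n ∧ 1 ≤ c.2 ∧ c.2 + 1 ≤ c.1 := fun c => mem_ferrers_st
  have hmemB' : ∀ c : ℕ × ℕ, c ∈ B' ↔ c.1 ≤ n+1 ∧ 1 ≤ c.2 ∧ c.2 + 1 ≤ c.1 := fun c => mem_ferrers_st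
  have hBB' : B ⊆ B' := by
    intro c hc
    have := (hmemB c).mp hc
    exact (hmemB' c).mpr ⟨by omega, this.2⟩
  rw [r2Nat_eq, r2Nat_eq, r2Nat_eq]
  rw [← Finset.sum_filter_add_sum_filter_not (filePl B' (k+1)) (fun P => ∀ c ∈ P, c.1 ≤ n)]
  congr 1
  · -- placements avoiding column n+1
    have hset : (filePl B' (k+1)).filter (fun P => ∀ c ∈ P, c.1 ≤ n) = filePl B (k+1) := by
      ext P
      simp only [Finset.mem_filter, mem_filePl]
      constructor
      · rintro ⟨⟨hsub, hcard, hinj⟩, hcol⟩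
        refine ⟨fun c hc => ?_, hcard, hinj⟩
        have := (hmemB' c).mp (hsub hc)
        exact (hmemB c).mpr ⟨hcol c hc, this.2⟩
      · rintro ⟨hsub, hcard, hinj⟩
        refine ⟨⟨fun c hc => hBB' (hsub hc), hcard, hinj⟩, fun c hc => ((hmemB c).mp (hsub hc)).1⟩
    rw [hset]
    refine Finset.sum_congr rfl fun P hP => ?_
    exact wt_stable (Nat.le_succ n) (rows_le (mem_filePl.mp hP).1)
  · -- placements using column n+1
    have key : ∑ P ∈ (filePl B' (k+1)).filter (fun P => ¬ ∀ c ∈ P, c.1 ≤ n), wt (n+1) P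
        = ∑ x ∈ (filePl B k) ×ˢ Finset.Icc 1 n, wt (n+1) (insert (n+1, x.2) x.1) := by
      refine (Finset.sum_bij (fun x _ => insert ((n+1 : ℕ), x.2) x.1) ?_ ?_ ?_ ?_).symm
      · -- maps into the target set
        rintro ⟨P', j⟩ hx
        rw [Finset.mem_product] at hx
        obtain ⟨hP', hj⟩ := hx
        obtain ⟨hsub, hcard, hinj⟩ := mem_filePl.mp hP'
        rw [Finset.mem_Icc] at hj
        have hcols : ∀ c ∈ P', c.1 ≤ n := fun c hc => ((hmemB c).mp (hsub hc)).1
        have hnotmem : ((n+1 : ℕ), j) ∉ P' := by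
          intro h
          have : n + 1 ≤ n := hcols _ h
          omega
        rw [Finset.mem_filter, mem_filePl]
        refine ⟨⟨?_, ?_, ?_⟩, ?_⟩
        · intro c hc
          rcases Finset.mem_insert.mp hc with rfl | hc
          · exact (hmemB' _).mpr ⟨le_refl _, by omega, by omega⟩
          · exact hBB' (hsub hc)
        · rw [Finset.card_insert_of_notMem hnotmem, hcard]
        · intro c hc d hd hcd
          rcases Finset.mem_insert.mp hc with rfl | hc <;> rcases Finset.mem_insert.mp hd with rfl | hd
          · rfl
          · exact absurd hcd (by have := hcols _ hd; omega)
          · exact absurd hcd (by have := hcols _ hc; omega)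
          · exact hinj c hc d hd hcd
        · intro hall
          have : n + 1 ≤ n := hall (n+1, j) (Finset.mem_insert_self _ _)
          omega
      · -- injective
        rintro ⟨P₁, j₁⟩ h₁ ⟨P₂, j₂⟩ h₂ heq
        rw [Finset.mem_product] at h₁ h₂
        dsimp only at heq
        have hc₁ : ∀ c ∈ P₁, c.1 ≤ n :=
          fun c hc => ((hmemB c).mp ((mem_filePl.mp h₁.1).1 hc)).1
        have hc₂ : ∀ c ∈ P₂, c.1 ≤ n :=
          fun c hc => ((hmemB c).mp ((mem_filePl.mp h₂.1).1 hc)).1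
        have hj : j₁ = j₂ := by
          have hmem : ((n+1 : ℕ), j₁) ∈ insert ((n+1:ℕ), j₁) P₁ := Finset.mem_insert_self _ _
          rw [heq] at hmem
          rcases Finset.mem_insert.mp hmem with h | h
          · exact (Prod.ext_iff.mp h).2
          · have : n + 1 ≤ n := hc₂ _ h
            omega
        subst hj
        have hP : P₁ = P₂ := by
          ext c
          constructor
          · intro hc
            have hc' : c ∈ insert ((n+1:ℕ), j₁) P₁ := Finset.mem_insert_of_mem hc
            rw [heq] at hc'
            rcases Finset.mem_insert.mp hc' with rfl | h
            · have : n + 1 ≤ n := hc₁ _ hc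
              omega
            · exact h
          · intro hc
            have hc' : c ∈ insert ((n+1:ℕ), j₁) P₂ := Finset.mem_insert_of_mem hc
            rw [← heq] at hc'
            rcases Finset.mem_insert.mp hc' with rfl | h
            · have : n + 1 ≤ n := hc₂ _ hc
              omega
            · exact h
        rw [hP]
      · -- surjective
        intro P hP
        rw [Finset.mem_filter] at hP
        obtain ⟨hPm, hncol⟩ := hP
        obtain ⟨hsub, hcard, hinj⟩ := mem_filePl.mp hPm
        push_neg at hncol
        obtain ⟨c, hcP, hcn⟩ := hncol
        have hcB' := (hmemB' c).mp (hsub hcP)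
        have hc1 : c.1 = n + 1 := by omega
        have hQsub : P.erase c ⊆ B := by
          intro d hd
          have hdP := Finset.mem_of_mem_erase hd
          have hdB' := (hmemB' d).mp (hsub hdP)
          have hd1 : d.1 ≤ n := by
            by_contra hlt
            have hdc : d = c := hinj d hdP c hcP (by omega)
            exact (Finset.ne_of_mem_erase hd) hdc
          exact (hmemB d).mpr ⟨hd1, hdB'.2⟩
        refine ⟨(P.erase c, c.2), ?_, ?_⟩
        · rw [Finset.mem_product]
          constructor
          · rw [mem_filePl]
            refine ⟨hQsub, ?_, fun a ha b hb =>
              hinj a (Finset.mem_of_mem_erase ha) b (Finset.mem_of_mem_erase hb)⟩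
            rw [Finset.card_erase_of_mem hcP, hcard]
            omega
          · rw [Finset.mem_Icc]
            omega
        · have hcc : ((n+1:ℕ), c.2) = c := Prod.ext hc1.symm rfl
          dsimp only
          rw [hcc, Finset.insert_erase hcP]
      · intro x hx
        rfl
    rw [key, Finset.sum_product]
    rw [Finset.mul_sum]
    refine Finset.sum_congr rfl fun P' hP' => ?_
    obtain ⟨hsub, hcard, hinj⟩ := mem_filePl.mp hP'
    have hrows : ∀ c ∈ P', c.2 ≤ n := rows_le hsub
    have hwt : ∀ j ∈ Finset.Icc 1 n,
        wt (n+1) (insert ((n+1:ℕ), j) P')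
          = ((P'.filter fun d => d.2 = j).card + 1) * wt n P' := by
      intro j hj
      rw [Finset.mem_Icc] at hj
      have hnm : ((n+1:ℕ), j) ∉ P' := by
        intro h
        have : n + 1 ≤ n := ((hmemB _).mp (hsub h)).1
        omega
      have hj' : (((n+1:ℕ), j)).2 ∈ Finset.Icc 1 (n+1) := by
        simp only [Finset.mem_Icc]
        omega
      rw [wt_insert hnm hj', wt_stable (Nat.le_succ n) hrows]
    calc ∑ j ∈ Finset.Icc 1 n, wt (n+1) (insert ((n+1:ℕ), j) P')
        = ∑ j ∈ Finset.Icc 1 n, ((P'.filter fun d => d.2 = j).card + 1) * wt n P' :=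
          Finset.sum_congr rfl hwt
      _ = (∑ j ∈ Finset.Icc 1 n, ((P'.filter fun d => d.2 = j).card + 1)) * wt n P' :=
          (Finset.sum_mul _ _ _).symm
      _ = (n + k) * wt n P' := by
          congr 1
          rw [Finset.sum_add_distrib]
          have hfib : P'.card = ∑ j ∈ Finset.Icc 1 n, (P'.filter fun d => d.2 = j).card :=
            Finset.card_eq_sum_card_fiberwise (fun c hc => Finset.mem_Icc.mpr
              ⟨((hmemB c).mp (hsub hc)).2.1, hrows c hc⟩)
          rw [← hfib, hcard]
          simp [Nat.card_Icc]
          omega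


lemma r2Nat_zero (n : ℕ) : r2Nat n 0 = 1 := by
  rw [r2Nat_eq]
  have h : filePl (ferrers n stH) 0 = {∅} := by
    ext P
    simp only [mem_filePl, Finset.mem_singleton, Finset.card_eq_zero]
    constructor
    · rintro ⟨-, h, -⟩; exact h
    · rintro rfl; simp
  rw [h]
  simp [wt]

lemma ferrers_one : ferrers 1 stH = ∅ := by
  ext c
  simp only [mem_ferrers_st, Finset.notMem_empty, iff_false]
  omega

lemma r2Nat_one_succ (k : ℕ) : r2Nat 1 (k+1) = 0 := by
  rw [r2Nat_eq]
  have h : filePl (ferrers 1 stH) (k+1) = ∅ := by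
    rw [ferrers_one]
    ext P
    simp only [mem_filePl, Finset.notMem_empty, iff_false, Finset.subset_empty]
    rintro ⟨rfl, hcard, -⟩
    simp at hcard
  simp [h]

lemma grec (n k : ℕ) (hn : 1 ≤ n) :
    ((n + (k+1) - 1).choose (2*(k+1)) : ℚ) * (2*(k+1)).factorial / ((k+1).factorial * 2^(k+1))
        + ((n + k : ℕ) : ℚ) *
          (((n + k - 1).choose (2*k) : ℚ) * (2*k).factorial / (k.factorial * 2^k))
      = (((n+1) + (k+1) - 1).choose (2*(k+1)) : ℚ) * (2*(k+1)).factorial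
          / ((k+1).factorial * 2^(k+1)) := by
  have e1 : (n+1) + (k+1) - 1 = n + k + 1 := by omega
  have e2 : n + (k+1) - 1 = n + k := by omega
  have e3 : 2*(k+1) = 2*k+1+1 := by omega
  rw [e1, e2, e3]
  have pas : (n+k+1).choose (2*k+1+1) = (n+k).choose (2*k+1) + (n+k).choose (2*k+1+1) :=
    Nat.choose_succ_succ _ _
  have h2 : (n+k) * (n+k-1).choose (2*k) = (n+k).choose (2*k+1) * (2*k+1) := by
    have h3 : n + k - 1 + 1 = n + k := by omega
    have h4 := Nat.add_one_mul_choose_eq (n+k-1) (2*k)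
    rw [h3] at h4
    exact h4
  have pasQ : ((n+k+1).choose (2*k+1+1) : ℚ)
      = ((n+k).choose (2*k+1) : ℚ) + ((n+k).choose (2*k+1+1) : ℚ) := by exact_mod_cast pas
  have h2Q : ((n+k : ℕ) : ℚ) * ((n+k-1).choose (2*k) : ℚ)
      = ((n+k).choose (2*k+1) : ℚ) * (2*(k:ℚ)+1) := by exact_mod_cast h2
  have f1 : ((2*k+1+1).factorial : ℚ) = (2*(k:ℚ)+1+1) * ((2*(k:ℚ)+1) * (2*k).factorial) := by
    rw [Nat.factorial_succ, Nat.factorial_succ]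
    push_cast
    ring
  have f2 : (((k+1)).factorial : ℚ) = ((k:ℚ)+1) * k.factorial := by
    rw [Nat.factorial_succ]
    push_cast
    ring
  rw [pasQ, f1, f2, pow_succ]
  set C2 : ℚ := ((n+k).choose (2*k+1+1) : ℚ) with hC2
  set C4 : ℚ := ((n+k).choose (2*k+1) : ℚ) with hC4
  set C3 : ℚ := ((n+k-1).choose (2*k) : ℚ) with hC3
  set F0 : ℚ := ((2*k).factorial : ℚ) with hF0
  set Kf : ℚ := (k.factorial : ℚ) with hKf
  set NK : ℚ := ((n+k : ℕ) : ℚ) with hNK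
  set T : ℚ := (2:ℚ)^k with hT
  have hKf0 : Kf ≠ 0 := Nat.cast_ne_zero.mpr k.factorial_ne_zero
  have hT0 : T ≠ 0 := pow_ne_zero _ two_ne_zero
  have hk1 : ((k:ℚ)+1) ≠ 0 := by positivity
  have key : NK * (C3 * F0 / (Kf * T))
      = C4 * ((2*(k:ℚ)+1+1) * ((2*(k:ℚ)+1) * F0)) / (((k:ℚ)+1) * Kf * (T * 2)) := by
    calc NK * (C3 * F0 / (Kf * T)) = (NK * C3) * (F0 / (Kf * T)) := by ring
      _ = (C4 * (2*(k:ℚ)+1)) * (F0 / (Kf * T)) := by rw [h2Q]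
      _ = C4 * ((2*(k:ℚ)+1+1) * ((2*(k:ℚ)+1) * F0)) / (((k:ℚ)+1) * Kf * (T * 2)) := by
          field_simp
          ring
  rw [key]
  ring

lemma main_aux : ∀ n k : ℕ, (r2Nat (n+1) k : ℚ)
    = (((n+1) + k - 1).choose (2*k) : ℚ) * (2*k).factorial / (k.factorial * 2^k) := by
  intro n
  induction n with
  | zero =>
    intro k
    cases k with
    | zero => simp [r2Nat_zero]
    | succ k =>
      rw [r2Nat_one_succ]
      have h : (1 + (k+1) - 1).choose (2*(k+1)) = 0 := Nat.choose_eq_zero_of_lt (by omega)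
      rw [h]
      simp
  | succ m ih =>
    intro k
    cases k with
    | zero =>
      rw [r2Nat_zero]
      simp
    | succ k =>
      rw [r2Nat_rec (m+1) k, Nat.cast_add, Nat.cast_mul, ih (k+1), ih k]
      exact grec (m+1) k (by omega)

/-- The 2-creation rook number of the staircase board equals the k-matching number of
the complete graph on `n+k-1` vertices. -/
theorem r2_staircase_eq_matching_number (n k : ℕ) (hn : 1 ≤ n) :
    (r2Nat n k : ℚ)
      = ((n + k - 1).choose (2 * k) : ℚ) * (2 * k).factorial
          / (k.factorial * 2 ^ k) := by
  obtain ⟨m, rfl⟩ : ∃ m, n = m + 1 := ⟨n - 1, by omega⟩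
  exact main_aux m k

end EllRook
end
end
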